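/- Let s ∈ (0,1), d ≥ 1, and let v, w be measurable functions on ℝ^d with w supported in the closed ball B(x₀, 3R/4). Suppose v, w ∈ L²(B(x₀,R)) and ∫_{B(x₀,R)^c} |v(y)| |y−x₀|^{−d−2s} dy < ∞. Then |∫_{B_R} ∫_{B_R^c} w(x)(v(x)−v(y)) |x−y|^{−d−2s} dy dx| ≤ C R^{−2s} (‖v‖²_{L²(B_R)} + ‖w‖²_{L²(B_R)}) + C R^{d+2s} (∫_{B_R^c} |v(y)| |y−x₀|^{−d−2s} dy)² , with C depending only on d and s. -/

import Mathlib

open MeasureTheory Metric Real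

lemma aux_integrable {d : ℕ} {K : ℝ} (hK : (d:ℝ) < K) {a : ℝ} (ha : 0 < a)
    (x : EuclideanSpace ℝ (Fin d)) :
    IntegrableOn (fun y : EuclideanSpace ℝ (Fin d) => ‖y - x‖ ^ (-K)) (closedBall x a)ᶜ := by
  have hK0 : 0 ≤ K := le_trans (Nat.cast_nonneg d) hK.le
  have hfin : (Module.finrank ℝ (EuclideanSpace ℝ (Fin d)) : ℝ) < K := by
    rw [finrank_euclideanSpace_fin]; exact hK
  have h0 : Integrable (fun y : EuclideanSpace ℝ (Fin d) => (1 + ‖y‖) ^ (-K)) :=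
    integrable_one_add_norm hfin
  have h1 : Integrable (fun y : EuclideanSpace ℝ (Fin d) => (1 + ‖y - x‖) ^ (-K)) := by
    exact ((measurePreserving_sub_right (volume : Measure (EuclideanSpace ℝ (Fin d))) x).integrable_comp_emb
      (MeasurableEquiv.subRight x).measurableEmbedding).2 h0
  have h2 : Integrable (fun y : EuclideanSpace ℝ (Fin d) =>
      ((1+a)/a) ^ K * (1 + ‖y - x‖) ^ (-K)) := h1.const_mul _
  refine Integrable.mono h2.integrableOn ?_ ?_
  · exact Measurable.aestronglyMeasurable (by fun_prop)
  · rw [ae_restrict_iff' measurableSet_closedBall.compl]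
    filter_upwards with y hy
    have hy' : a < ‖y - x‖ := by
      simpa [mem_closedBall, dist_eq_norm] using hy
    have ht : 0 < ‖y - x‖ := ha.trans hy'
    rw [Real.norm_eq_abs, abs_of_nonneg (rpow_nonneg (norm_nonneg _) _), Real.norm_eq_abs,
      abs_of_nonneg (by positivity)]
    rw [Real.rpow_neg (norm_nonneg _), Real.rpow_neg (by positivity),
      ← Real.inv_rpow (norm_nonneg _), ← Real.inv_rpow (by positivity),
      ← Real.mul_rpow (by positivity) (by positivity)]
    apply Real.rpow_le_rpow (by positivity) _ hK0
    rw [← div_eq_mul_inv, inv_le_iff_one_le_mul₀ ht]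
    rw [div_mul_eq_mul_div, le_div_iff₀ (by positivity), div_mul_eq_mul_div,
      le_div_iff₀ (by positivity)]
    nlinarith [hy', ha]

lemma aux_translate {d : ℕ} (K : ℝ) {a : ℝ}
    (x : EuclideanSpace ℝ (Fin d)) :
    ∫ y in (closedBall x a)ᶜ, ‖y - x‖ ^ (-K) =
      ∫ z in (closedBall (0 : EuclideanSpace ℝ (Fin d)) a)ᶜ, ‖z‖ ^ (-K) := by
  have h := (measurePreserving_add_right (volume : Measure (EuclideanSpace ℝ (Fin d)))
      x).setIntegral_preimage_emb
    (MeasurableEquiv.addRight x).measurableEmbedding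
    (fun y => ‖y - x‖ ^ (-K)) ((closedBall x a)ᶜ)
  have hset : ((· + x) ⁻¹' (closedBall x a)ᶜ) = (closedBall (0 : EuclideanSpace ℝ (Fin d)) a)ᶜ := by
    ext z
    simp [mem_closedBall, dist_eq_norm, add_sub_cancel_right]
  rw [← h, hset]
  simp [add_sub_cancel_right]

open Pointwise in
lemma aux_scale {d : ℕ} {K : ℝ} (hK : 0 ≤ K) {a : ℝ} (ha : 0 < a) :
    ∫ z in (closedBall (0 : EuclideanSpace ℝ (Fin d)) a)ᶜ, ‖z‖ ^ (-K) =
      a ^ ((d:ℝ) - K) *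
        ∫ z in (closedBall (0 : EuclideanSpace ℝ (Fin d)) 1)ᶜ, ‖z‖ ^ (-K) := by
  have h := Measure.setIntegral_comp_smul_of_pos (volume : Measure (EuclideanSpace ℝ (Fin d)))
    (fun z => ‖z‖ ^ (-K)) ((closedBall (0 : EuclideanSpace ℝ (Fin d)) 1)ᶜ) ha
  have hset : a • ((closedBall (0 : EuclideanSpace ℝ (Fin d)) 1)ᶜ)
      = (closedBall (0 : EuclideanSpace ℝ (Fin d)) a)ᶜ := by
    ext z
    rw [Set.mem_smul_set_iff_inv_smul_mem₀ ha.ne']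
    simp only [Set.mem_compl_iff, mem_closedBall, dist_zero_right, norm_smul, norm_inv,
      Real.norm_eq_abs, abs_of_pos ha, not_le]
    rw [lt_inv_mul_iff₀ ha, mul_one]
  rw [hset] at h
  have hLHS : (∫ z in (closedBall (0 : EuclideanSpace ℝ (Fin d)) 1)ᶜ, ‖a • z‖ ^ (-K))
      = a ^ (-K) * ∫ z in (closedBall (0 : EuclideanSpace ℝ (Fin d)) 1)ᶜ, ‖z‖ ^ (-K) := by
    rw [← integral_const_mul]
    apply setIntegral_congr_fun (measurableSet_closedBall.compl)
    intro z _
    simp only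
    rw [norm_smul, Real.norm_eq_abs, abs_of_pos ha,
      Real.mul_rpow ha.le (norm_nonneg _)]
  rw [hLHS] at h
  have hfin : Module.finrank ℝ (EuclideanSpace ℝ (Fin d)) = d := finrank_euclideanSpace_fin
  rw [hfin, smul_eq_mul] at h
  have had : (0:ℝ) < a ^ d := by positivity
  have : ∫ z in (closedBall (0 : EuclideanSpace ℝ (Fin d)) a)ᶜ, ‖z‖ ^ (-K)
      = a ^ d * (a ^ (-K) * ∫ z in (closedBall (0 : EuclideanSpace ℝ (Fin d)) 1)ᶜ, ‖z‖ ^ (-K)) := by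
    rw [h]; field_simp
  rw [this, ← mul_assoc]
  congr 1
  rw [← Real.rpow_natCast a d, ← Real.rpow_add ha, sub_eq_add_neg]

lemma aux_div_rpow_neg {t c e : ℝ} (ht : 0 ≤ t) (hc : 0 < c) :
    (t / c) ^ (-e) = c ^ e * t ^ (-e) := by
  rw [div_eq_mul_inv, Real.mul_rpow ht (inv_nonneg.2 hc.le), Real.inv_rpow hc.le,
    Real.rpow_neg hc.le, inv_inv, mul_comm]

set_option maxHeartbeats 1000000 in
theorem stmt_17 (d : ℕ) (hd : 1 ≤ d) (s : ℝ) (hs : s ∈ Set.Ioo (0:ℝ) 1) :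
    ∃ C : ℝ, 0 < C ∧ ∀ (x₀ : EuclideanSpace ℝ (Fin d)) (R : ℝ)
      (v w : EuclideanSpace ℝ (Fin d) → ℝ), 0 < R →
      Measurable v → Measurable w →
      (∀ x, x ∉ closedBall x₀ (3 * R / 4) → w x = 0) →
      MemLp v 2 (volume.restrict (ball x₀ R)) →
      MemLp w 2 (volume.restrict (ball x₀ R)) →
      IntegrableOn (fun y => |v y| * ‖y - x₀‖ ^ (-(d:ℝ) - 2 * s)) (ball x₀ R)ᶜ →
      |∫ x in ball x₀ R, ∫ y in (ball x₀ R)ᶜ,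
          w x * (v x - v y) / ‖x - y‖ ^ ((d:ℝ) + 2 * s)| ≤
        C * R ^ (-2 * s) *
            ((∫ x in ball x₀ R, (v x) ^ 2) + ∫ x in ball x₀ R, (w x) ^ 2) +
          C * R ^ ((d:ℝ) + 2 * s) *
            (∫ y in (ball x₀ R)ᶜ, |v y| * ‖y - x₀‖ ^ (-(d:ℝ) - 2 * s)) ^ 2 := by
  obtain ⟨hs0, hs1⟩ := hs
  set K : ℝ := (d:ℝ) + 2 * s with hKdef
  have hKd : (d:ℝ) < K := by rw [hKdef]; linarith
  have hK0 : 0 < K := by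
    have : (1:ℝ) ≤ d := by exact_mod_cast hd
    linarith
  set c₁ : ℝ := ∫ z in (closedBall (0 : EuclideanSpace ℝ (Fin d)) 1)ᶜ, ‖z‖ ^ (-K) with hc₁def
  have hc₁ : 0 ≤ c₁ := integral_nonneg fun z => Real.rpow_nonneg (norm_nonneg _) _
  set vd : ℝ := (volume (ball (0 : EuclideanSpace ℝ (Fin d)) 1)).toReal with hvddef
  have hvd : 0 ≤ vd := ENNReal.toReal_nonneg
  have h8 : (0:ℝ) < (8:ℝ) ^ (2*s) := Real.rpow_pos_of_pos (by norm_num) _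
  have h4 : (0:ℝ) < (4:ℝ) ^ K := Real.rpow_pos_of_pos (by norm_num) _
  refine ⟨(8:ℝ)^(2*s)*c₁ + (4:ℝ)^K*(1+vd) + 1, ?_, ?_⟩
  · nlinarith [mul_nonneg h8.le hc₁, mul_pos h4 (show (0:ℝ) < 1 + vd by linarith)]
  intro x₀ R v w hR hv hw hwsupp hv2 hw2 hA
  have hexp : (-(d:ℝ) - 2 * s) = -K := by rw [hKdef]; ring
  rw [hexp] at hA ⊢
  set A : ℝ := ∫ y in (ball x₀ R)ᶜ, |v y| * ‖y - x₀‖ ^ (-K) with hAdef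
  have hA0 : 0 ≤ A :=
    integral_nonneg fun y => mul_nonneg (abs_nonneg _) (Real.rpow_nonneg (norm_nonneg _) _)
  haveI : IsFiniteMeasure (volume.restrict (ball x₀ R)) :=
    ⟨by rw [Measure.restrict_apply_univ]; exact measure_ball_lt_top⟩
  have hRn : (0:ℝ) < R ^ (-2*s) := Real.rpow_pos_of_pos hR _
  have hRp : (0:ℝ) < R ^ K := Real.rpow_pos_of_pos hR _
  -- the inner-integral bound
  have inner_bound : ∀ x : EuclideanSpace ℝ (Fin d),
      |∫ y in (ball x₀ R)ᶜ, w x * (v x - v y) / ‖x - y‖ ^ K| ≤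
        (8:ℝ)^(2*s) * c₁ * R^(-2*s) * (|w x| * |v x|) + ((4:ℝ)^K * A) * |w x| := by
    intro x
    by_cases hwx : w x = 0
    · simp [hwx]
    · have hx3 : x ∈ closedBall x₀ (3 * R / 4) := by
        by_contra h; exact hwx (hwsupp x h)
      have hxd : dist x x₀ ≤ 3*R/4 := mem_closedBall.1 hx3
      have hsub : (ball x₀ R)ᶜ ⊆ (closedBall x (R/8))ᶜ := by
        intro y hy
        simp only [Set.mem_compl_iff, mem_ball, not_lt] at hy
        simp only [Set.mem_compl_iff, mem_closedBall, not_le]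
        have h1 : dist y x₀ ≤ dist y x + dist x x₀ := dist_triangle _ _ _
        linarith
      have hint1 : IntegrableOn (fun y : EuclideanSpace ℝ (Fin d) => ‖y - x‖ ^ (-K))
          (ball x₀ R)ᶜ :=
        (aux_integrable hKd (show (0:ℝ) < R/8 by linarith) x).mono_set hsub
      have hmaj : Integrable (fun y => |w x| * |v x| * ‖y - x‖ ^ (-K)
          + (4:ℝ)^K * |w x| * (|v y| * ‖y - x₀‖ ^ (-K))) (volume.restrict (ball x₀ R)ᶜ) :=
        (hint1.const_mul _).add (hA.const_mul _)
      have key : ∀ y ∈ (ball x₀ R)ᶜ, ‖w x * (v x - v y) / ‖x - y‖ ^ K‖ ≤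
          |w x| * |v x| * ‖y - x‖ ^ (-K) + (4:ℝ)^K * |w x| * (|v y| * ‖y - x₀‖ ^ (-K)) := by
        intro y hy
        simp only [Set.mem_compl_iff, mem_ball, not_lt] at hy
        have hd1 : dist y x₀ ≤ dist y x + dist x x₀ := dist_triangle _ _ _
        have nxy : ‖x - y‖ = dist y x := by rw [← dist_eq_norm, dist_comm]
        have nyx₀ : ‖y - x₀‖ = dist y x₀ := by rw [← dist_eq_norm]
        have hxy : R/4 ≤ ‖x - y‖ := by rw [nxy]; linarith
        have hpos : 0 < ‖x - y‖ := lt_of_lt_of_le (by linarith) hxy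
        have h4xy : ‖y - x₀‖ / 4 ≤ ‖x - y‖ := by rw [nxy, nyx₀]; linarith
        have hby : 0 < ‖y - x₀‖ / 4 := by rw [nyx₀]; linarith
        have e2 : ‖x - y‖ ^ (-K) ≤ (4:ℝ)^K * ‖y - x₀‖ ^ (-K) := by
          have h := Real.rpow_le_rpow_of_nonpos hby h4xy (neg_nonpos.2 hK0.le)
          rwa [aux_div_rpow_neg (norm_nonneg _) (by norm_num : (0:ℝ) < 4)] at h
        have habs : |v x - v y| ≤ |v x| + |v y| := abs_sub _ _
        rw [Real.norm_eq_abs, abs_div, abs_mul,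
          abs_of_pos (Real.rpow_pos_of_pos hpos K), div_eq_mul_inv,
          ← Real.rpow_neg (norm_nonneg _)]
        have hXnn : 0 ≤ ‖x - y‖ ^ (-K) := Real.rpow_nonneg (norm_nonneg _) _
        have e3 : (‖x - y‖:ℝ) ^ (-K) = ‖y - x‖ ^ (-K) := by rw [norm_sub_rev]
        have q1 : |w x| * |v x - v y| * ‖x - y‖ ^ (-K)
            ≤ |w x| * (|v x| + |v y|) * ‖x - y‖ ^ (-K) :=
          mul_le_mul_of_nonneg_right (mul_le_mul_of_nonneg_left habs (abs_nonneg _)) hXnn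
        have q2 : (|w x| * |v y|) * (‖x - y‖ ^ (-K))
            ≤ (|w x| * |v y|) * ((4:ℝ)^K * ‖y - x₀‖ ^ (-K)) :=
          mul_le_mul_of_nonneg_left e2 (mul_nonneg (abs_nonneg _) (abs_nonneg _))
        calc |w x| * |v x - v y| * ‖x - y‖ ^ (-K)
            ≤ |w x| * (|v x| + |v y|) * ‖x - y‖ ^ (-K) := q1
          _ = |w x| * |v x| * ‖x - y‖ ^ (-K)
              + (|w x| * |v y|) * (‖x - y‖ ^ (-K)) := by ring
          _ ≤ |w x| * |v x| * ‖x - y‖ ^ (-K)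
              + (|w x| * |v y|) * ((4:ℝ)^K * ‖y - x₀‖ ^ (-K)) := by linarith [q2]
          _ = |w x| * |v x| * ‖y - x‖ ^ (-K)
              + (4:ℝ)^K * |w x| * (|v y| * ‖y - x₀‖ ^ (-K)) := by rw [← e3]; ring
      have hΦ : (∫ y in (ball x₀ R)ᶜ, ‖y - x‖ ^ (-K)) ≤ (8:ℝ)^(2*s)*c₁*R^(-2*s) := by
        have hmono := setIntegral_mono_set
          (aux_integrable hKd (show (0:ℝ) < R/8 by linarith) x)
          (Filter.Eventually.of_forall fun y => Real.rpow_nonneg (norm_nonneg _) _)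
          (HasSubset.Subset.eventuallyLE hsub)
        refine hmono.trans ?_
        rw [aux_translate, aux_scale hK0.le (show (0:ℝ) < R/8 by linarith)]
        have hdk : ((d:ℝ) - K) = -(2*s) := by rw [hKdef]; ring
        rw [hdk, aux_div_rpow_neg hR.le (by norm_num : (0:ℝ) < 8)]
        apply le_of_eq
        have : (-(2*s) : ℝ) = -2*s := by ring
        rw [this]; ring
      calc |∫ y in (ball x₀ R)ᶜ, w x * (v x - v y) / ‖x - y‖ ^ K|
          ≤ ∫ y in (ball x₀ R)ᶜ, (|w x| * |v x| * ‖y - x‖ ^ (-K)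
              + (4:ℝ)^K * |w x| * (|v y| * ‖y - x₀‖ ^ (-K))) := by
            rw [← Real.norm_eq_abs]
            refine norm_integral_le_of_norm_le hmaj ?_
            rw [ae_restrict_iff' measurableSet_ball.compl]
            filter_upwards with y hy using key y hy
        _ = |w x| * |v x| * (∫ y in (ball x₀ R)ᶜ, ‖y - x‖ ^ (-K))
              + (4:ℝ)^K * |w x| * A := by
            rw [integral_add (hint1.const_mul _) (hA.const_mul _),
              integral_const_mul, integral_const_mul]
        _ ≤ (8:ℝ)^(2*s)*c₁*R^(-2*s) * (|w x| * |v x|) + ((4:ℝ)^K * A) * |w x| := by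
            have q := mul_le_mul_of_nonneg_left hΦ
              (mul_nonneg (abs_nonneg (w x)) (abs_nonneg (v x)))
            nlinarith [q]
  -- integrability of the outer majorant pieces
  have hwv_int : Integrable (fun x => |w x| * |v x|) (volume.restrict (ball x₀ R)) := by
    refine Integrable.mono ((hv2.integrable_sq.add hw2.integrable_sq).div_const 2)
      (Measurable.aestronglyMeasurable (by fun_prop)) ?_
    filter_upwards with x
    rw [Real.norm_eq_abs, abs_of_nonneg (mul_nonneg (abs_nonneg _) (abs_nonneg _)),
      Real.norm_eq_abs]
    have h1 : |w x| * |v x| ≤ (v x ^ 2 + w x ^ 2) / 2 := by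
      nlinarith [sq_nonneg (|v x| - |w x|), sq_abs (v x), sq_abs (w x)]
    exact h1.trans (le_abs_self _)
  have hw_int : Integrable w (volume.restrict (ball x₀ R)) := hw2.integrable one_le_two
  -- outer estimate chain
  have hBint : Integrable (fun x => (8:ℝ)^(2*s) * c₁ * R^(-2*s) * (|w x| * |v x|)
      + ((4:ℝ)^K * A) * |w x|) (volume.restrict (ball x₀ R)) :=
    (hwv_int.const_mul _).add (hw_int.abs.const_mul _)
  have step1 : |∫ x in ball x₀ R, ∫ y in (ball x₀ R)ᶜ,
      w x * (v x - v y) / ‖x - y‖ ^ K| ≤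
      ∫ x in ball x₀ R, ((8:ℝ)^(2*s) * c₁ * R^(-2*s) * (|w x| * |v x|)
        + ((4:ℝ)^K * A) * |w x|) := by
    rw [← Real.norm_eq_abs]
    refine norm_integral_le_of_norm_le hBint ?_
    filter_upwards with x
    rw [Real.norm_eq_abs]
    exact inner_bound x
  -- pointwise Young for the second piece and |wv| ≤ (v²+w²)/2
  haveI : Nontrivial (EuclideanSpace ℝ (Fin d)) :=
    Module.nontrivial_of_finrank_pos (R := ℝ) (by rw [finrank_euclideanSpace_fin]; omega)
  have volball : (volume (ball x₀ R)).toReal = R ^ d * vd := by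
    rw [Measure.addHaar_ball volume x₀ hR.le, ENNReal.toReal_mul,
      ENNReal.toReal_ofReal (by positivity), finrank_euclideanSpace_fin, hvddef]
  have step2 : ∫ x in ball x₀ R, ((8:ℝ)^(2*s) * c₁ * R^(-2*s) * (|w x| * |v x|)
        + ((4:ℝ)^K * A) * |w x|) ≤
      (8:ℝ)^(2*s) * c₁ * R^(-2*s) * (((∫ x in ball x₀ R, (v x)^2)
        + ∫ x in ball x₀ R, (w x)^2)/2)
      + (4:ℝ)^K * ((R^(-2*s) * ∫ x in ball x₀ R, (w x)^2) + R^(2*s) * A^2 * (R^d * vd))/2 := by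
    have hGint : Integrable (fun x => (8:ℝ)^(2*s) * c₁ * R^(-2*s) * ((v x^2 + w x^2)/2)
        + (4:ℝ)^K * ((R^(-2*s) * w x^2 + R^(2*s) * A^2)/2)) (volume.restrict (ball x₀ R)) :=
      (((hv2.integrable_sq.add hw2.integrable_sq).div_const 2).const_mul _).add
        ((((hw2.integrable_sq.const_mul _).add (integrable_const _)).div_const 2).const_mul _)
    have hpt : ∀ x, (8:ℝ)^(2*s) * c₁ * R^(-2*s) * (|w x| * |v x|) + ((4:ℝ)^K * A) * |w x|
        ≤ (8:ℝ)^(2*s) * c₁ * R^(-2*s) * ((v x^2 + w x^2)/2)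
          + (4:ℝ)^K * ((R^(-2*s) * w x^2 + R^(2*s) * A^2)/2) := by
      intro x
      have p1 : |w x| * |v x| ≤ (v x^2 + w x^2)/2 := by
        nlinarith [sq_nonneg (|v x| - |w x|), sq_abs (v x), sq_abs (w x)]
      have hss : R^(-s) * R^s = 1 := by
        rw [← Real.rpow_add hR]; simp
      have h1 : R^(-s) * R^(-s) = R^(-2*s) := by
        rw [← Real.rpow_add hR]; congr 1; ring
      have h2 : R^s * R^s = R^(2*s) := by
        rw [← Real.rpow_add hR]; congr 1; ring
      have p2 : A * |w x| ≤ (R^(-2*s) * w x^2 + R^(2*s) * A^2)/2 := by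
        have e : (R^(-s) * |w x| - R^s * A)^2 = (R^(-s)*R^(-s)) * (|w x| * |w x|)
            - 2*(R^(-s)*R^s) * (|w x| * A) + (R^s*R^s) * (A*A) := by ring
        have hww : |w x| * |w x| = w x ^ 2 := by rw [abs_mul_abs_self, sq]
        have hAA : A * A = A ^ 2 := (sq A).symm
        rw [h1, h2, hss, hww, hAA] at e
        nlinarith [sq_nonneg (R^(-s) * |w x| - R^s * A), e]
      have q1 := mul_le_mul_of_nonneg_left p1
        (mul_nonneg (mul_nonneg h8.le hc₁) hRn.le)
      have q2 := mul_le_mul_of_nonneg_left p2 h4.le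
      nlinarith [q1, q2]
    have hmono := integral_mono_of_nonneg
      (Filter.Eventually.of_forall fun x => by positivity) hGint
      (Filter.Eventually.of_forall hpt)
    refine hmono.trans (le_of_eq ?_)
    have i1 : Integrable (fun x : EuclideanSpace ℝ (Fin d) =>
        (8:ℝ)^(2*s) * c₁ * R^(-2*s) * ((v x^2 + w x^2)/2)) (volume.restrict (ball x₀ R)) := by
      exact ((hv2.integrable_sq.add hw2.integrable_sq).div_const 2).const_mul _
    have i2 : Integrable (fun x : EuclideanSpace ℝ (Fin d) =>
        (4:ℝ)^K * ((R^(-2*s) * w x^2 + R^(2*s) * A^2)/2)) (volume.restrict (ball x₀ R)) := by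
      exact (((hw2.integrable_sq.const_mul _).add (integrable_const _)).div_const 2).const_mul _
    have i4a : Integrable (fun x : EuclideanSpace ℝ (Fin d) =>
        R^(-2*s) * w x^2) (volume.restrict (ball x₀ R)) := by
      exact hw2.integrable_sq.const_mul _
    rw [integral_add i1 i2, integral_const_mul, integral_const_mul, integral_div,
      integral_add hv2.integrable_sq hw2.integrable_sq, integral_div,
      integral_add i4a (integrable_const _),
      integral_const_mul, integral_const, smul_eq_mul, measureReal_restrict_apply_univ,
      measureReal_def, volball]
    ring
  -- final assembly
  have hIV : 0 ≤ ∫ x in ball x₀ R, (v x)^2 := integral_nonneg fun x => sq_nonneg _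
  have hIW : 0 ≤ ∫ x in ball x₀ R, (w x)^2 := integral_nonneg fun x => sq_nonneg _
  have hRK : R ^ (2*s) * (R:ℝ) ^ (d:ℕ) = R ^ K := by
    rw [← Real.rpow_natCast R d, ← Real.rpow_add hR, hKdef, add_comm]
  have hRKpos : (0:ℝ) < R ^ K := Real.rpow_pos_of_pos hR _
  have hrw : R^(2*s) * A^2 * ((R:ℝ)^(d:ℕ) * vd) = vd * A^2 * R^K := by
    rw [← hRK]; ring
  rw [hrw] at step2
  refine (step1.trans step2).trans ?_
  linarith [mul_nonneg (mul_nonneg h8.le hc₁) (mul_nonneg hRn.le hIV),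
    mul_nonneg (mul_nonneg h8.le hc₁) (mul_nonneg hRn.le hIW),
    mul_nonneg h4.le (mul_nonneg hRn.le hIV),
    mul_nonneg h4.le (mul_nonneg hRn.le hIW),
    mul_nonneg (mul_nonneg h4.le hvd) (mul_nonneg hRn.le hIV),
    mul_nonneg (mul_nonneg h4.le hvd) (mul_nonneg hRn.le hIW),
    mul_nonneg hRn.le hIV, mul_nonneg hRn.le hIW,
    mul_nonneg (mul_nonneg h8.le hc₁) (mul_nonneg hRKpos.le (sq_nonneg A)),
    mul_nonneg h4.le (mul_nonneg hRKpos.le (sq_nonneg A)),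
    mul_nonneg (mul_nonneg h4.le hvd) (mul_nonneg hRKpos.le (sq_nonneg A)),
    mul_nonneg hRKpos.le (sq_nonneg A)]
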